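/- For every complex number q with |q| < 1, the infinite product ∏_{n=1}^∞ (1 − q^n) converges and equals 1 + Σ_{n=1}^∞ (−1)^n (q^{n(3n+1)/2} + q^{n(3n−1)/2}), where the series converges absolutely. -/

import Mathlib

open Finset Filter Topology

namespace PentagonalAux

variable {q : ℂ}

lemma two_mul_half (j : ℕ) : 2 * (j*(j+1)/2) = j*(j+1) :=
  Nat.mul_div_cancel' (Nat.even_mul_succ_self j).two_dvd

lemma half_succ (j : ℕ) : (j+1)*(j+2)/2 = j*(j+1)/2 + (j+1) := by
  have h1 := two_mul_half j
  have h2 : 2*((j+1)*(j+2)/2) = (j+1)*(j+2) := by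
    have := two_mul_half (j+1)
    simpa [show (j+1)*(j+1+1) = (j+1)*(j+2) from by ring] using this
  have h3 : (j+1)*(j+2) = j*(j+1) + 2*(j+1) := by ring
  omega

lemma expW (n : ℕ) : n*(n+1) + (n+1)*(n+2)/2 = (n+1)*(3*(n+1)-1)/2 := by
  have h : (n+1)*(3*(n+1)-1) = 2*(n*(n+1)) + (n+1)*(n+2) := by
    have : 3*(n+1)-1 = 3*n+2 := by omega
    rw [this]; ring
  have h2 := two_mul_half (n+1)
  omega

lemma expF (n : ℕ) : (n+1)*(n+1) + (n+1)*(n+2)/2 = (n+1)*(3*(n+1)+1)/2 := by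
  have h : (n+1)*(3*(n+1)+1) = 2*((n+1)*(n+1)) + (n+1)*(n+2) := by ring
  have h2 := two_mul_half (n+1)
  omega

lemma telescope (d c v : ℕ → ℂ) (n : ℕ) (hd0 : d 0 = c 0)
    (h1 : ∀ j ∈ range n, d (j+1) = c (j+1) + v j) :
    ∑ j ∈ range (n+1), (d j - v j) = ∑ j ∈ range (n+1), c j - v n := by
  rw [sum_sub_distrib, sum_range_succ', hd0, sum_congr rfl h1, sum_add_distrib,
    sum_range_succ v n, sum_range_succ' c n]
  ring

/-- Shanks' finite form of the pentagonal number theorem. -/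
lemma key (q : ℂ) (n : ℕ) :
    ∑ j ∈ range (n+1), (-1:ℂ)^j * q^(n*j + j*(j+1)/2) * ∏ i ∈ Ico j n, (1 - q^(i+1))
    = 1 + ∑ j ∈ range n, (-1:ℂ)^(j+1) *
        (q^((j+1)*(3*(j+1)+1)/2) + q^((j+1)*(3*(j+1)-1)/2)) := by
  induction n with
  | zero => simp
  | succ n ih =>
    have hterm : ∀ j ∈ range (n+1),
        (-1:ℂ)^j * q^((n+1)*j + j*(j+1)/2) * ∏ i ∈ Ico j (n+1), (1 - q^(i+1))
        = ((-1:ℂ)^j * q^(n*j + j*(j+1)/2) * ∏ i ∈ Ico j n, (1 - q^(i+1))) * q^j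
          - (-1:ℂ)^j * q^(n*(j+1) + (j+1)*(j+2)/2) * ∏ i ∈ Ico j n, (1 - q^(i+1)) := by
      intro j hj
      rw [mem_range] at hj
      rw [prod_Ico_succ_top (by omega)]
      have e1 : (n+1)*j + j*(j+1)/2 = (n*j + j*(j+1)/2) + j := by
        have : (n+1)*j = n*j + j := by ring
        omega
      have e2 : n*(j+1) + (j+1)*(j+2)/2 = (n*j + j*(j+1)/2) + j + (n+1) := by
        have h1 := half_succ j
        have : n*(j+1) = n*j + n := by ring
        omega
      rw [e1, e2, pow_add, pow_add, pow_add]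
      ring
    have hshift : ∀ j ∈ range n,
        ((-1:ℂ)^(j+1) * q^(n*(j+1) + (j+1)*(j+1+1)/2) * ∏ i ∈ Ico (j+1) n, (1 - q^(i+1))) * q^(j+1)
        = (-1:ℂ)^(j+1) * q^(n*(j+1) + (j+1)*(j+1+1)/2) * ∏ i ∈ Ico (j+1) n, (1 - q^(i+1))
          + (-1:ℂ)^j * q^(n*(j+1) + (j+1)*(j+2)/2) * ∏ i ∈ Ico j n, (1 - q^(i+1)) := by
      intro j hj
      rw [mem_range] at hj
      rw [prod_eq_prod_Ico_succ_bot (by omega : j < n) (fun i => 1 - q^(i+1))]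
      have e : (j+1)*(j+1+1) = (j+1)*(j+2) := by ring
      rw [e]
      ring
    have tele := telescope
      (fun j => ((-1:ℂ)^j * q^(n*j + j*(j+1)/2) * ∏ i ∈ Ico j n, (1 - q^(i+1))) * q^j)
      (fun j => (-1:ℂ)^j * q^(n*j + j*(j+1)/2) * ∏ i ∈ Ico j n, (1 - q^(i+1)))
      (fun j => (-1:ℂ)^j * q^(n*(j+1) + (j+1)*(j+2)/2) * ∏ i ∈ Ico j n, (1 - q^(i+1)))
      n (by norm_num) hshift
    rw [sum_range_succ, sum_congr rfl hterm, tele, ih]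
    simp only [Ico_self, prod_empty, mul_one]
    have hW : n*(n+1) + (n+1)*(n+1+1)/2 = (n+1)*(3*(n+1)-1)/2 := expW n
    have hF : (n+1)*(n+1) + (n+1)*(n+1+1)/2 = (n+1)*(3*(n+1)+1)/2 := expF n
    rw [hW, hF, sum_range_succ]
    ring

variable {q : ℂ}

lemma summable_rpow (r : ℝ) (r0 : 0 ≤ r) (hr : r < 1) : Summable (fun i : ℕ => r^(i+1)) := by
  have : Summable (fun i : ℕ => r^i * r) := (summable_geometric_of_lt_one r0 hr).mul_right r
  simpa [pow_succ] using this

lemma norm_prod_exp_le (hq : ‖q‖ < 1) (s : Finset ℕ) :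
    ‖∏ i ∈ s, (1 - q^(i+1))‖ ≤ Real.exp ((1-‖q‖)⁻¹) := by
  have r0 : (0:ℝ) ≤ ‖q‖ := norm_nonneg q
  calc ‖∏ i ∈ s, (1 - q^(i+1))‖ = ∏ i ∈ s, ‖1 - q^(i+1)‖ := norm_prod _ _
    _ ≤ ∏ i ∈ s, Real.exp (‖q‖^(i+1)) := by
        apply Finset.prod_le_prod (fun i _ => norm_nonneg _)
        intro i _
        calc ‖1 - q^(i+1)‖ ≤ ‖(1:ℂ)‖ + ‖q^(i+1)‖ := norm_sub_le _ _
          _ = 1 + ‖q‖^(i+1) := by rw [norm_one, norm_pow]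
          _ ≤ Real.exp (‖q‖^(i+1)) := by
              have := Real.add_one_le_exp (‖q‖^(i+1)); linarith
    _ = Real.exp (∑ i ∈ s, ‖q‖^(i+1)) := (Real.exp_sum _ _).symm
    _ ≤ Real.exp ((1-‖q‖)⁻¹) := by
        apply Real.exp_le_exp.mpr
        calc ∑ i ∈ s, ‖q‖^(i+1) ≤ ∑' i : ℕ, ‖q‖^(i+1) :=
              Summable.sum_le_tsum s (fun i _ => pow_nonneg r0 _) (summable_rpow _ r0 hq)
          _ ≤ ∑' i : ℕ, ‖q‖^i := Summable.tsum_le_tsum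
              (fun i => pow_le_pow_of_le_one r0 hq.le (by omega))
              (summable_rpow _ r0 hq) (summable_geometric_of_lt_one r0 hq)
          _ = (1-‖q‖)⁻¹ := tsum_geometric_of_lt_one r0 hq

lemma factor_ne_zero (hq : ‖q‖ < 1) (n : ℕ) : 1 - q^(n+1) ≠ 0 := by
  have h : ‖q^(n+1)‖ < 1 := by
    rw [norm_pow]; exact pow_lt_one₀ (norm_nonneg q) hq (by omega)
  intro h0
  have : q^(n+1) = 1 := by linear_combination -h0
  rw [this] at h; simp at h

lemma mult (hq : ‖q‖ < 1) : Multipliable (fun n : ℕ => 1 - q^(n+1)) := by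
  have r0 : (0:ℝ) ≤ ‖q‖ := norm_nonneg q
  refine Complex.multipliable_of_summable_log ?_
  apply Summable.of_norm
  have hbound : ∀ n : ℕ, ‖Complex.log (1 - q^(n+1))‖ ≤ ((1-‖q‖)⁻¹/2 + 1) * ‖q‖^(n+1) := by
    intro n
    have hzn : ‖-q^(n+1)‖ < 1 := by
      rw [norm_neg, norm_pow]; exact pow_lt_one₀ r0 hq (by omega)
    have h1 : (1 : ℂ) - q^(n+1) = 1 + -q^(n+1) := by ring
    rw [h1]
    refine le_trans (Complex.norm_log_one_add_le hzn) ?_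
    rw [norm_neg, norm_pow]
    have hle1 : ‖q‖^(n+1) ≤ ‖q‖ := by simpa using pow_le_pow_of_le_one r0 hq.le (show 1 ≤ n+1 by omega)
    have hle2 : ‖q‖^(n+1) ≤ 1 := le_trans hle1 hq.le
    have hinv : (1 - ‖q‖^(n+1))⁻¹ ≤ (1 - ‖q‖)⁻¹ := by
      apply inv_anti₀ (by linarith) (by linarith)
    have hsq : (‖q‖^(n+1))^2 ≤ ‖q‖^(n+1) := by
      nlinarith [pow_nonneg r0 (n+1)]
    have hpos : 0 ≤ (1 - ‖q‖^(n+1))⁻¹ := inv_nonneg.mpr (by linarith)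
    nlinarith [pow_nonneg r0 (n+1)]
  refine Summable.of_nonneg_of_le (fun n => norm_nonneg _) hbound ?_
  exact (summable_rpow _ r0 hq).mul_left _

lemma summable_series (hq : ‖q‖ < 1) :
    Summable (fun n : ℕ => ‖(-1 : ℂ) ^ (n + 1) *
      (q ^ ((n + 1) * (3 * (n + 1) + 1) / 2) + q ^ ((n + 1) * (3 * (n + 1) - 1) / 2))‖) := by
  have r0 : (0:ℝ) ≤ ‖q‖ := norm_nonneg q
  refine Summable.of_nonneg_of_le (fun n => norm_nonneg _) (fun n => ?_)
    ((summable_rpow _ r0 hq).mul_left 2)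
  have hF : n+1 ≤ (n+1)*(3*(n+1)+1)/2 := by
    rw [Nat.le_div_iff_mul_le (by norm_num)]
    exact Nat.mul_le_mul_left _ (by omega)
  have hW : n+1 ≤ (n+1)*(3*(n+1)-1)/2 := by
    rw [Nat.le_div_iff_mul_le (by norm_num)]
    exact Nat.mul_le_mul_left _ (by omega)
  calc ‖(-1 : ℂ) ^ (n + 1) * (q ^ ((n+1)*(3*(n+1)+1)/2) + q ^ ((n+1)*(3*(n+1)-1)/2))‖
      = ‖q ^ ((n+1)*(3*(n+1)+1)/2) + q ^ ((n+1)*(3*(n+1)-1)/2)‖ := by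
        rw [norm_mul, norm_pow, norm_neg, norm_one, one_pow, one_mul]
    _ ≤ ‖q‖ ^ ((n+1)*(3*(n+1)+1)/2) + ‖q‖ ^ ((n+1)*(3*(n+1)-1)/2) := by
        refine le_trans (norm_add_le _ _) ?_
        rw [norm_pow, norm_pow]
    _ ≤ ‖q‖^(n+1) + ‖q‖^(n+1) := add_le_add
        (pow_le_pow_of_le_one r0 hq.le hF) (pow_le_pow_of_le_one r0 hq.le hW)
    _ = 2 * ‖q‖^(n+1) := by ring


lemma final (hq : ‖q‖ < 1) :
    ∏' n : ℕ, (1 - q ^ (n + 1)) =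
      1 + ∑' n : ℕ, (-1 : ℂ) ^ (n + 1) *
        (q ^ ((n + 1) * (3 * (n + 1) + 1) / 2) + q ^ ((n + 1) * (3 * (n + 1) - 1) / 2)) := by
  have r0 : (0:ℝ) ≤ ‖q‖ := norm_nonneg q
  have hP : Tendsto (fun n => ∏ i ∈ range n, (1 - q^(i+1))) atTop
      (𝓝 (∏' n : ℕ, (1 - q^(n+1)))) := (mult hq).hasProd.tendsto_prod_nat
  have hsum' : Summable (fun n : ℕ => (-1 : ℂ) ^ (n + 1) *
      (q ^ ((n + 1) * (3 * (n + 1) + 1) / 2) + q ^ ((n + 1) * (3 * (n + 1) - 1) / 2))) :=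
    Summable.of_norm (summable_series hq)
  have hL : Tendsto (fun n => 1 + ∑ j ∈ range n, (-1 : ℂ) ^ (j + 1) *
      (q ^ ((j + 1) * (3 * (j + 1) + 1) / 2) + q ^ ((j + 1) * (3 * (j + 1) - 1) / 2))) atTop
      (𝓝 (1 + ∑' n : ℕ, (-1 : ℂ) ^ (n + 1) *
      (q ^ ((n + 1) * (3 * (n + 1) + 1) / 2) + q ^ ((n + 1) * (3 * (n + 1) - 1) / 2)))) :=
    (hsum'.hasSum.tendsto_sum_nat).const_add 1
  have hS_to_sum : Tendsto (fun n => ∑ j ∈ range (n+1),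
      (-1:ℂ)^j * q^(n*j + j*(j+1)/2) * ∏ i ∈ Ico j n, (1 - q^(i+1))) atTop
      (𝓝 (1 + ∑' n : ℕ, (-1 : ℂ) ^ (n + 1) *
      (q ^ ((n + 1) * (3 * (n + 1) + 1) / 2) + q ^ ((n + 1) * (3 * (n + 1) - 1) / 2)))) :=
    hL.congr (fun n => (key q n).symm)
  have hdiff : ∀ n : ℕ,
      (∑ j ∈ range (n+1), (-1:ℂ)^j * q^(n*j + j*(j+1)/2) * ∏ i ∈ Ico j n, (1 - q^(i+1)))
        - ∏ i ∈ range n, (1 - q^(i+1))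
      = ∑ j ∈ range n, (-1:ℂ)^(j+1) * q^(n*(j+1) + (j+1)*(j+1+1)/2) *
          ∏ i ∈ Ico (j+1) n, (1 - q^(i+1)) := by
    intro n
    have h0 : (-1:ℂ)^0 * q^(n*0 + 0*(0+1)/2) * ∏ i ∈ Ico 0 n, (1 - q^(i+1))
        = ∏ i ∈ range n, (1 - q^(i+1)) := by
      rw [Finset.range_eq_Ico]
      norm_num
    rw [sum_range_succ', h0]
    ring
  have hnorm : ∀ n : ℕ,
      ‖(∑ j ∈ range (n+1), (-1:ℂ)^j * q^(n*j + j*(j+1)/2) * ∏ i ∈ Ico j n, (1 - q^(i+1)))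
        - ∏ i ∈ range n, (1 - q^(i+1))‖
      ≤ (n:ℝ) * (Real.exp ((1-‖q‖)⁻¹) * ‖q‖^n) := by
    intro n
    rw [hdiff n]
    refine le_trans (norm_sum_le _ _) ?_
    have hterm : ∀ j ∈ range n,
        ‖(-1:ℂ)^(j+1) * q^(n*(j+1) + (j+1)*(j+1+1)/2) * ∏ i ∈ Ico (j+1) n, (1 - q^(i+1))‖
        ≤ Real.exp ((1-‖q‖)⁻¹) * ‖q‖^n := by
      intro j _
      rw [norm_mul, norm_mul, norm_pow, norm_pow, norm_neg, norm_one, one_pow, one_mul]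
      have hexp : n ≤ n*(j+1) + (j+1)*(j+1+1)/2 := by
        have : n*1 ≤ n*(j+1) := Nat.mul_le_mul_left n (by omega)
        omega
      have h1 : ‖q‖^(n*(j+1) + (j+1)*(j+1+1)/2) ≤ ‖q‖^n :=
        pow_le_pow_of_le_one r0 hq.le hexp
      have h2 := norm_prod_exp_le hq (Ico (j+1) n)
      calc ‖q‖^(n*(j+1) + (j+1)*(j+1+1)/2) * ‖∏ i ∈ Ico (j+1) n, (1 - q^(i+1))‖
          ≤ ‖q‖^n * Real.exp ((1-‖q‖)⁻¹) :=
            mul_le_mul h1 h2 (norm_nonneg _) (pow_nonneg r0 _)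
        _ = Real.exp ((1-‖q‖)⁻¹) * ‖q‖^n := by ring
    calc (∑ j ∈ range n, ‖(-1:ℂ)^(j+1) * q^(n*(j+1) + (j+1)*(j+1+1)/2) *
            ∏ i ∈ Ico (j+1) n, (1 - q^(i+1))‖)
        ≤ ∑ _j ∈ range n, Real.exp ((1-‖q‖)⁻¹) * ‖q‖^n := Finset.sum_le_sum hterm
      _ = (n:ℝ) * (Real.exp ((1-‖q‖)⁻¹) * ‖q‖^n) := by
          rw [Finset.sum_const, card_range, nsmul_eq_mul]
  have htend0 : Tendsto (fun n : ℕ => (n:ℝ) * (Real.exp ((1-‖q‖)⁻¹) * ‖q‖^n)) atTop (𝓝 0) := by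
    have hs : Summable (fun n : ℕ => (n:ℝ)^1 * ‖q‖^n) :=
      summable_pow_mul_geometric_of_norm_lt_one 1
        (by rwa [Real.norm_eq_abs, abs_of_nonneg r0])
    have ht := hs.tendsto_atTop_zero
    have := ht.const_mul (Real.exp ((1-‖q‖)⁻¹))
    simp only [mul_zero] at this
    exact this.congr (fun n => by ring)
  have h0 : Tendsto (fun n => (∑ j ∈ range (n+1),
      (-1:ℂ)^j * q^(n*j + j*(j+1)/2) * ∏ i ∈ Ico j n, (1 - q^(i+1)))
        - ∏ i ∈ range n, (1 - q^(i+1))) atTop (𝓝 0) :=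
    squeeze_zero_norm hnorm htend0
  have hS_to_prod : Tendsto (fun n => ∑ j ∈ range (n+1),
      (-1:ℂ)^j * q^(n*j + j*(j+1)/2) * ∏ i ∈ Ico j n, (1 - q^(i+1))) atTop
      (𝓝 (∏' n : ℕ, (1 - q^(n+1)))) := by
    have := h0.add hP
    simp only [zero_add] at this
    exact this.congr (fun n => by ring)
  exact tendsto_nhds_unique hS_to_prod hS_to_sum

end PentagonalAux

/-- Euler's pentagonal number theorem: for `|q| < 1`, the product `∏_{n≥1} (1 - qⁿ)`
converges and equals `1 + Σ_{n≥1} (-1)ⁿ (q^{n(3n+1)/2} + q^{n(3n-1)/2})`, with the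
series converging absolutely. -/
theorem pentagonal_number_theorem (q : ℂ) (hq : ‖q‖ < 1) :
    Multipliable (fun n : ℕ => 1 - q ^ (n + 1)) ∧
    Summable (fun n : ℕ =>
      ‖(-1 : ℂ) ^ (n + 1) *
        (q ^ ((n + 1) * (3 * (n + 1) + 1) / 2) + q ^ ((n + 1) * (3 * (n + 1) - 1) / 2))‖) ∧
    ∏' n : ℕ, (1 - q ^ (n + 1)) =
      1 + ∑' n : ℕ, (-1 : ℂ) ^ (n + 1) *
        (q ^ ((n + 1) * (3 * (n + 1) + 1) / 2) + q ^ ((n + 1) * (3 * (n + 1) - 1) / 2)) :=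
  ⟨PentagonalAux.mult hq, PentagonalAux.summable_series hq, PentagonalAux.final hq⟩
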